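/- The packet-level code over F_5 with k = 4, n = 6 and parity symbols p_0(t) = m_0(t−4) + m_1(t−3) + m_2(t−2) + m_3(t−1) and p_1(t) = m_0(t−5) + 2·m_1(t−4) + 3·m_2(t−3) + 4·m_3(t−2) (the diagonal embedding of a [6,4] MDS code over F_5, which is a rate-optimal (2,5) SC) is not a (1,2) streaming code: when packet c(0) is erased, the symbol m_0(0) cannot be recovered from the packets c(1) and c(2); i.e., there exist two message streams with the same coded packets at times 1 and 2 but different m_0(0). -/

import Mathlib

/-- A packet-level code with a causal systematic encoder: the parity part of the
coded packet at time `t` is a fixed function of the message packets at times `≤ t`. -/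
structure PacketCode (F : Type) (k n : ℕ) where
  parity : (ℤ → Fin k → F) → ℤ → Fin (n - k) → F
  causal : ∀ (m m' : ℤ → Fin k → F) (t : ℤ),
    (∀ t' ≤ t, m t' = m' t') → parity m t = parity m' t

/-- A valid message stream vanishes at negative times. -/
def IsMsgStream {F : Type} [Zero F] {k : ℕ} (m : ℤ → Fin k → F) : Prop :=
  ∀ t < 0, m t = 0

/-- `(a, τ)` streaming-code property. -/
def IsSC {F : Type} [Zero F] {k n : ℕ} (C : PacketCode F k n) (a τ : ℕ) : Prop :=
  ∀ m m' : ℤ → Fin k → F, IsMsgStream m → IsMsgStream m' →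
    ∀ t : ℤ, 0 ≤ t →
      ∀ E : Finset ℤ, (∀ x ∈ E, t ≤ x ∧ x ≤ t + τ) → t ∈ E → E.card ≤ a →
        (∀ t' < t, m t' = m' t') →
        (∀ t' : ℤ, t ≤ t' → t' ≤ t + τ → t' ∉ E →
          m t' = m' t' ∧ C.parity m t' = C.parity m' t') →
        m t = m' t

/-- `(a, τ, r)` locally recoverable streaming code. -/
def IsLRSC {F : Type} [Zero F] {k n : ℕ} (C : PacketCode F k n) (a τ r : ℕ) : Prop :=
  IsSC C a τ ∧ IsSC C 1 r

/-- Diagonal embedding of the `[6,4]` MDS code over `F₅`: `k = 4`, `n = 6`, with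
parity symbols `p₀(t) = m₀(t-4) + m₁(t-3) + m₂(t-2) + m₃(t-1)` and
`p₁(t) = m₀(t-5) + 2·m₁(t-4) + 3·m₂(t-3) + 4·m₃(t-2)`. This is a rate-optimal
`(2,5)` SC. -/
def deCode64 : PacketCode (ZMod 5) 4 6 where
  parity := fun m t s =>
    if (s : ℕ) = 0 then
      m (t - 4) 0 + m (t - 3) 1 + m (t - 2) 2 + m (t - 1) 3
    else
      m (t - 5) 0 + 2 * m (t - 4) 1 + 3 * m (t - 3) 2 + 4 * m (t - 2) 3
  causal := by
    intro m m' t h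
    funext s
    try dsimp only
    rw [h (t - 5) (by omega), h (t - 4) (by omega), h (t - 3) (by omega),
      h (t - 2) (by omega), h (t - 1) (by omega)]

/-- The `(2,5)` SC obtained by diagonal embedding of a `[6,4]` MDS code over
`F₅` is not a `(1,2)` streaming code: if packet `c(0)` is erased then `m₀(0)`
cannot be recovered from `c(1)` and `c(2)` — there are two message streams with
the same coded packets at times `1` and `2` but different `m₀(0)`. -/
theorem deCode64_not_one_two_SC :
    (∃ m m' : ℤ → Fin 4 → ZMod 5, IsMsgStream m ∧ IsMsgStream m' ∧
      (∀ t' : ℤ, 1 ≤ t' → t' ≤ 2 →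
        m t' = m' t' ∧ deCode64.parity m t' = deCode64.parity m' t') ∧
      m 0 0 ≠ m' 0 0) ∧
    ¬ IsSC deCode64 1 2 := by
  set m : ℤ → Fin 4 → ZMod 5 := fun _ _ => 0 with hm
  set m' : ℤ → Fin 4 → ZMod 5 := fun t i => if t = 0 ∧ i = 0 then 1 else 0 with hm'
  have hms : IsMsgStream m := fun t ht => rfl
  have hms' : IsMsgStream m' := by
    intro t ht
    funext i
    simp [hm', show ¬(t = 0) by omega]
  have hmm' : ∀ t' : ℤ, t' ≠ 0 → m t' = m' t' := by
    intro t' ht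
    funext i
    simp [hm, hm', ht]
  have hkey : ∀ t' : ℤ, 1 ≤ t' → t' ≤ 2 →
      m t' = m' t' ∧ deCode64.parity m t' = deCode64.parity m' t' := by
    intro t' h1 h2
    refine ⟨hmm' t' (by omega), ?_⟩
    funext s
    show (if (s : ℕ) = 0 then
        m (t' - 4) 0 + m (t' - 3) 1 + m (t' - 2) 2 + m (t' - 1) 3
      else
        m (t' - 5) 0 + 2 * m (t' - 4) 1 + 3 * m (t' - 3) 2 + 4 * m (t' - 2) 3) =
      (if (s : ℕ) = 0 then
        m' (t' - 4) 0 + m' (t' - 3) 1 + m' (t' - 2) 2 + m' (t' - 1) 3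
      else
        m' (t' - 5) 0 + 2 * m' (t' - 4) 1 + 3 * m' (t' - 3) 2 + 4 * m' (t' - 2) 3)
    simp only [hm, hm']
    simp [show t' - 4 ≠ 0 by omega, show t' - 3 ≠ 0 by omega, show t' - 5 ≠ 0 by omega]
  have hne : m 0 0 ≠ m' 0 0 := by simp [hm, hm']; decide
  refine ⟨⟨m, m', hms, hms', hkey, hne⟩, ?_⟩
  intro hsc
  have := hsc m m' hms hms' 0 le_rfl {0}
    (by intro x hx; simp at hx; omega) (by simp) (by simp)
    (fun t' ht => hmm' t' (by omega))
    (by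
      intro t' h1 h2 h3
      simp at h3
      exact hkey t' (by omega) h2)
  exact hne (congrFun this 0)
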